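/- arXiv:0710.0116 — 4 statements merged into one kernel-verified Lean document; each statement's English description precedes it below -/
import Mathlib

section
/- Fix real numbers x > 0, b > 0 and c > 0. Then the limit as the real variable r → ∞ of r·log₂( 1 + x / (1 + b/(2^{c/r} − 1)) ) equals c·x/b. -/
open Filter Real

/-- Asymptotics of the elementary-compression rate with many agents:
`r·log₂(1 + x/(1 + b/(2^{c/r} − 1))) → c·x/b` as `r → ∞`. -/
theorem elementary_compression_asymptotic_rate (x b c : ℝ) (hx : 0 < x) (hb : 0 < b)
    (hc : 0 < c) :
    Tendsto (fun r : ℝ =>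
        r * Real.logb 2 (1 + x / (1 + b / ((2 : ℝ) ^ (c / r) - 1))))
      atTop (nhds (c * x / b)) := by
  set L := Real.log 2 with hLdef
  have hL : 0 < L := Real.log_pos one_lt_two
  -- basic positivity facts, eventually
  have hev : ∀ᶠ r : ℝ in atTop, (0:ℝ) < r := eventually_gt_atTop 0
  have hDpos : ∀ r : ℝ, 0 < r → 0 < (2:ℝ) ^ (c / r) - 1 := by
    intro r hr
    have : (1:ℝ) < (2:ℝ) ^ (c / r) :=
      Real.one_lt_rpow_iff_of_pos (by norm_num) |>.2 (Or.inl ⟨by norm_num, div_pos hc hr⟩)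
    linarith
  -- exp slope at 0
  have hE : Tendsto (fun s : ℝ => (Real.exp s - 1) / s) (nhdsWithin 0 {0}ᶜ) (nhds 1) := by
    have h := Real.hasDerivAt_exp 0
    rw [hasDerivAt_iff_tendsto_slope] at h
    simpa [slope_fun_def, Real.exp_zero, div_eq_inv_mul] using h
  -- c*L/r → 0 within ≠ 0
  have hcL : Tendsto (fun r : ℝ => c * L / r) atTop (nhdsWithin 0 {0}ᶜ) := by
    apply tendsto_nhdsWithin_of_tendsto_nhds_of_eventually_within
    · exact tendsto_const_nhds.div_atTop tendsto_id
    · filter_upwards [hev] with r hr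
      have : 0 < c * L / r := by positivity
      exact this.ne'
  -- r * (exp(cL/r) - 1) → c*L
  have h1 : Tendsto (fun r : ℝ => r * (Real.exp (c * L / r) - 1)) atTop (nhds (c * L)) := by
    have h := (hE.comp hcL).const_mul (c * L)
    rw [mul_one] at h
    refine h.congr' ?_
    filter_upwards [hev] with r hr
    have hne : c * L ≠ 0 := by positivity
    simp only [Function.comp]
    field_simp
  -- r * (2^(c/r) - 1) → c*L
  have hrd : Tendsto (fun r : ℝ => r * ((2:ℝ) ^ (c / r) - 1)) atTop (nhds (c * L)) := by
    refine h1.congr' ?_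
    filter_upwards [hev] with r hr
    rw [Real.rpow_def_of_pos (by norm_num : (0:ℝ) < 2)]
    rw [hLdef]
    ring_nf
  -- 2^(c/r) → 1
  have hexp : Tendsto (fun r : ℝ => (2:ℝ) ^ (c / r)) atTop (nhds 1) := by
    have h0 : Tendsto (fun r : ℝ => c / r) atTop (nhds 0) :=
      tendsto_const_nhds.div_atTop tendsto_id
    have h2' : Tendsto (fun r : ℝ => L * (c / r)) atTop (nhds 0) := by
      simpa using h0.const_mul L
    have h1' : Tendsto (fun r : ℝ => Real.exp (L * (c / r))) atTop (nhds 1) := by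
      have := (Real.continuous_exp.tendsto 0).comp h2'
      rw [Real.exp_zero] at this
      exact this
    refine h1'.congr' ?_
    filter_upwards with r
    rw [Real.rpow_def_of_pos (by norm_num : (0:ℝ) < 2)]
  have hD : Tendsto (fun r : ℝ => (2:ℝ) ^ (c / r) - 1) atTop (nhds 0) := by
    simpa using hexp.sub (tendsto_const_nhds : Tendsto (fun _ : ℝ => (1:ℝ)) atTop (nhds 1))
  -- r * g r → x * (c*L) / b
  have h2 : Tendsto (fun r : ℝ => r * (x / (1 + b / ((2:ℝ) ^ (c / r) - 1)))) atTop
      (nhds (x * (c * L) / b)) := by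
    have h := ((tendsto_const_nhds (x := x)).mul hrd).div
      (hD.add (tendsto_const_nhds (x := b))) (by simpa using hb.ne')
    rw [zero_add] at h
    refine h.congr' ?_
    filter_upwards [hev] with r hr
    have hDr := hDpos r hr
    have h1' : (0:ℝ) < (2:ℝ) ^ (c / r) - 1 + b := by linarith
    simp only [Pi.div_apply]
    field_simp
  -- g → 0 within ≠ 0
  have hg : Tendsto (fun r : ℝ => x / (1 + b / ((2:ℝ) ^ (c / r) - 1))) atTop
      (nhdsWithin 0 {0}ᶜ) := by
    apply tendsto_nhdsWithin_of_tendsto_nhds_of_eventually_within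
    · have h := ((tendsto_const_nhds (x := x)).mul hD).div
        (hD.add (tendsto_const_nhds (x := b))) (by simpa using hb.ne')
      rw [mul_zero, zero_add, zero_div] at h
      refine h.congr' ?_
      filter_upwards [hev] with r hr
      have hDr := hDpos r hr
      have h1' : (0:ℝ) < (2:ℝ) ^ (c / r) - 1 + b := by linarith
      simp only [Pi.div_apply]
      field_simp
    · filter_upwards [hev] with r hr
      have hDr := hDpos r hr
      have hp : 0 < 1 + b / ((2:ℝ) ^ (c / r) - 1) := by positivity
      have : 0 < x / (1 + b / ((2:ℝ) ^ (c / r) - 1)) := div_pos hx hp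
      exact this.ne'
  -- log(1+u)/u → 1
  have hlog : Tendsto (fun u : ℝ => Real.log (1 + u) / u) (nhdsWithin 0 {0}ᶜ) (nhds 1) := by
    have hd : HasDerivAt (fun u : ℝ => Real.log (1 + u)) 1 0 := by
      have h0 : HasDerivAt (fun u : ℝ => 1 + u) 1 0 := (hasDerivAt_id 0).const_add 1
      simpa using h0.log (by norm_num)
    rw [hasDerivAt_iff_tendsto_slope] at hd
    simpa [slope_fun_def, Real.log_one, div_eq_inv_mul] using hd
  have hcomp : Tendsto (fun r : ℝ =>
      Real.log (1 + x / (1 + b / ((2:ℝ) ^ (c / r) - 1))) /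
        (x / (1 + b / ((2:ℝ) ^ (c / r) - 1)))) atTop (nhds 1) := hlog.comp hg
  -- assemble
  have hfin := (h2.mul hcomp).div_const L
  have hval : x * (c * L) / b * 1 / L = c * x / b := by
    field_simp
  rw [hval] at hfin
  refine hfin.congr' ?_
  filter_upwards [hev] with r hr
  have hDr := hDpos r hr
  have hp : 0 < 1 + b / ((2:ℝ) ^ (c / r) - 1) := by positivity
  have hgne : x / (1 + b / ((2:ℝ) ^ (c / r) - 1)) ≠ 0 := (div_pos hx hp).ne'
  rw [Real.logb, ← hLdef]
  field_simp
end

section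
/- Let Δ₁, Δ₂, Δ₃, Δ₄ and θ be positive real numbers with c := Δ₁Δ₂/(Δ₃Δ₄) ≤ 1. Define G := (1 + 2θ) − √((1+2θ)² − 4θ(1+θ)·c), x₁ := Δ₄·G / (2Δ₂(1+θ)), x₂ := Δ₃·G / (2Δ₂(1+θ)), and Δ := Δ₁ + x₁x₂Δ₂ − x₁Δ₃ − x₂Δ₄. Then x₁·(Δ₃ − x₂Δ₂) = θ·Δ and x₂·(Δ₄ − x₁Δ₂) = θ·Δ. -/
private lemma kkt_aux (Δ₁ Δ₂ Δ₃ Δ₄ θ c s : ℝ) (h2 : Δ₂ ≠ 0) (h1θ : (1:ℝ) + θ ≠ 0)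
    (hs : s ^ 2 = (1 + 2 * θ) ^ 2 - 4 * θ * (1 + θ) * c)
    (hcc : c * (Δ₃ * Δ₄) = Δ₁ * Δ₂) :
    Δ₄ * ((1 + 2 * θ) - s) / (2 * Δ₂ * (1 + θ)) *
        (Δ₃ - Δ₃ * ((1 + 2 * θ) - s) / (2 * Δ₂ * (1 + θ)) * Δ₂) =
      θ * (Δ₁ + (Δ₄ * ((1 + 2 * θ) - s) / (2 * Δ₂ * (1 + θ))) *
          (Δ₃ * ((1 + 2 * θ) - s) / (2 * Δ₂ * (1 + θ))) * Δ₂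
        - (Δ₄ * ((1 + 2 * θ) - s) / (2 * Δ₂ * (1 + θ))) * Δ₃
        - (Δ₃ * ((1 + 2 * θ) - s) / (2 * Δ₂ * (1 + θ))) * Δ₄) := by
  set G := (1 + 2 * θ) - s with hGdef
  set d := 2 * Δ₂ * (1 + θ) with hddef
  have hd : d ≠ 0 := by simp [hddef, h2, h1θ]
  have hG : G ^ 2 = 2 * (1 + 2 * θ) * G - 4 * θ * (1 + θ) * c := by
    rw [hGdef]; linear_combination hs
  have key : Δ₄ * G * (Δ₃ * d - Δ₃ * G * Δ₂) =
      θ * (Δ₁ * d ^ 2 + Δ₄ * G * (Δ₃ * G) * Δ₂ - Δ₄ * G * Δ₃ * d - Δ₃ * G * Δ₄ * d) := by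
    rw [hddef]
    linear_combination (-(Δ₂ * (1 + θ) * Δ₃ * Δ₄)) * hG + (4 * θ * (1 + θ) ^ 2 * Δ₂) * hcc
  clear_value G d
  clear hGdef hddef hs hcc hG
  have hu : d * d⁻¹ = 1 := mul_inv_cancel₀ hd
  simp only [div_eq_mul_inv]
  linear_combination (d⁻¹) ^ 2 * key +
    (-(Δ₄ * G * Δ₃ * d⁻¹) + θ * Δ₁ * (d * d⁻¹ + 1) + 2 * θ * Δ₄ * G * Δ₃ * d⁻¹
      - 4 * θ * Δ₄ * G * Δ₃ * d⁻¹) * hu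

/-- KKT stationarity verification for the explicit two-agent CEO solution:
with `G = (1+2θ) − √((1+2θ)² − 4θ(1+θ)·Δ₁Δ₂/(Δ₃Δ₄))`, `x₁ = Δ₄G/(2Δ₂(1+θ))`,
`x₂ = Δ₃G/(2Δ₂(1+θ))` and `Δ = Δ₁ + x₁x₂Δ₂ − x₁Δ₃ − x₂Δ₄`, one has
`x₁(Δ₃ − x₂Δ₂) = θΔ` and `x₂(Δ₄ − x₁Δ₂) = θΔ`. -/
theorem kkt_stationarity_two_agents (Δ₁ Δ₂ Δ₃ Δ₄ θ : ℝ)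
    (h₁ : 0 < Δ₁) (h₂ : 0 < Δ₂) (h₃ : 0 < Δ₃) (h₄ : 0 < Δ₄) (hθ : 0 < θ)
    (hc : Δ₁ * Δ₂ / (Δ₃ * Δ₄) ≤ 1) :
    let G := (1 + 2 * θ) -
      Real.sqrt ((1 + 2 * θ) ^ 2 - 4 * θ * (1 + θ) * (Δ₁ * Δ₂ / (Δ₃ * Δ₄)))
    let x₁ := Δ₄ * G / (2 * Δ₂ * (1 + θ))
    let x₂ := Δ₃ * G / (2 * Δ₂ * (1 + θ))
    let Δ := Δ₁ + x₁ * x₂ * Δ₂ - x₁ * Δ₃ - x₂ * Δ₄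
    x₁ * (Δ₃ - x₂ * Δ₂) = θ * Δ ∧ x₂ * (Δ₄ - x₁ * Δ₂) = θ * Δ := by
  have h34 : (0 : ℝ) < Δ₃ * Δ₄ := by positivity
  set c := Δ₁ * Δ₂ / (Δ₃ * Δ₄) with hcdef
  have hc0 : 0 < c := by positivity
  have hDnn : 0 ≤ (1 + 2 * θ) ^ 2 - 4 * θ * (1 + θ) * c := by nlinarith
  set s := Real.sqrt ((1 + 2 * θ) ^ 2 - 4 * θ * (1 + θ) * c) with hsdef
  have hs : s ^ 2 = (1 + 2 * θ) ^ 2 - 4 * θ * (1 + θ) * c := Real.sq_sqrt hDnn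
  have hcc : c * (Δ₃ * Δ₄) = Δ₁ * Δ₂ := by rw [hcdef]; field_simp
  have hcc' : c * (Δ₄ * Δ₃) = Δ₁ * Δ₂ := by linarith [hcc, mul_comm Δ₃ Δ₄]
  intro G x₁ x₂ Δ
  have h2 : Δ₂ ≠ 0 := ne_of_gt h₂
  have h1θ : (1 : ℝ) + θ ≠ 0 := by positivity
  constructor
  · exact kkt_aux Δ₁ Δ₂ Δ₃ Δ₄ θ c s h2 h1θ hs hcc
  · have := kkt_aux Δ₁ Δ₂ Δ₄ Δ₃ θ c s h2 h1θ hs hcc'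
    show x₂ * (Δ₄ - x₁ * Δ₂) = θ * (Δ₁ + x₁ * x₂ * Δ₂ - x₁ * Δ₃ - x₂ * Δ₄)
    show Δ₃ * G / (2 * Δ₂ * (1 + θ)) * (Δ₄ - Δ₄ * G / (2 * Δ₂ * (1 + θ)) * Δ₂) = _
    linear_combination this
end

section
/- Let H be an s×t complex matrix, Q a t×t complex matrix, and D an s×s complex matrix, and suppose that I_s + H·Q·H* is invertible (where A* denotes conjugate transpose). Then det( Q·H*·(I_s + HQH*)^{-1}·D·(I_s + HQH*)^{-1}·H·Q ) · ( det(I_s + HQH*) )² = det( Q·H*·D·H·Q ). -/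
open Matrix

/-- Determinant push-through identity: for `H : s×t`, `Q : t×t`, `D : s×s` complex matrices
with `I_s + HQH*` invertible,
`det(QH*(I+HQH*)⁻¹ D (I+HQH*)⁻¹ HQ) · det(I+HQH*)² = det(QH* D HQ)`. -/
theorem det_pushthrough_identity (s t : ℕ)
    (H : Matrix (Fin s) (Fin t) ℂ) (Q : Matrix (Fin t) (Fin t) ℂ)
    (D : Matrix (Fin s) (Fin s) ℂ) (h : IsUnit (1 + H * Q * Hᴴ).det) :
    (Q * Hᴴ * (1 + H * Q * Hᴴ)⁻¹ * D * (1 + H * Q * Hᴴ)⁻¹ * (H * Q)).det *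
        ((1 + H * Q * Hᴴ).det) ^ 2
      = (Q * Hᴴ * D * (H * Q)).det := by
  set A : Matrix (Fin s) (Fin s) ℂ := 1 + H * Q * Hᴴ with hA
  set B : Matrix (Fin t) (Fin t) ℂ := 1 + Q * Hᴴ * H with hB
  set C : Matrix (Fin t) (Fin t) ℂ := 1 + Hᴴ * H * Q with hC
  have hBdet : B.det = A.det := by
    rw [hB, hA, show H * Q * Hᴴ = (H) * (Q * Hᴴ) by rw [Matrix.mul_assoc],
      show Q * Hᴴ * H = (Q * Hᴴ) * H from rfl, det_one_add_mul_comm]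
  have hCdet : C.det = A.det := by
    rw [hC, hA, show H * Q * Hᴴ = (H * Q) * Hᴴ from rfl,
      show Hᴴ * H * Q = Hᴴ * (H * Q) by rw [Matrix.mul_assoc], det_one_add_mul_comm]
  have h1 : B * (Q * Hᴴ) = (Q * Hᴴ) * A := by
    rw [hB, hA]; simp only [Matrix.add_mul, Matrix.mul_add, Matrix.one_mul, Matrix.mul_one, Matrix.mul_assoc]
  have h2 : A * (H * Q) = (H * Q) * C := by
    rw [hA, hC]; simp only [Matrix.add_mul, Matrix.mul_add, Matrix.one_mul, Matrix.mul_one, Matrix.mul_assoc]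
  set M : Matrix (Fin t) (Fin t) ℂ := Q * Hᴴ * A⁻¹ * D * A⁻¹ * (H * Q) with hM
  have key : B * M * C = Q * Hᴴ * D * (H * Q) := by
    have : B * M * C = (B * (Q * Hᴴ)) * A⁻¹ * D * (A⁻¹ * ((H * Q) * C)) := by
      rw [hM]; simp only [Matrix.mul_assoc]
    rw [this, h1, ← h2, Matrix.mul_nonsing_inv_cancel_right _ _ h,
      Matrix.nonsing_inv_mul_cancel_left _ _ h, Matrix.mul_assoc]
  have := congrArg Matrix.det key
  rw [det_mul, det_mul, hBdet, hCdet] at this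
  rw [← this]; ring
end

section
/- Let M be an r×r Hermitian positive semidefinite complex matrix. For q ∈ ℝ^r with all coordinates nonnegative, the value det( I_r + diag(1 − 2^{−q₁}, …, 1 − 2^{−q_r}) · M ) is a positive real number, and the function q ↦ log det( I_r + diag(1 − 2^{−q_i})_{i=1..r} · M ) is concave on the set { q ∈ ℝ^r : q_i ≥ 0 for all i }. -/
open Matrix ComplexOrder Finset
open scoped MatrixOrder

namespace LogDetCEO

variable {n : ℕ}

lemma unit_conj_det {U X : Matrix (Fin n) (Fin n) ℂ} (hU : U * star U = 1) :
    (U * X * star U).det = X.det := by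
  have h1 : U.det * (star U).det = 1 := by rw [← det_mul, hU, det_one]
  calc (U * X * star U).det = U.det * X.det * (star U).det := by rw [det_mul, det_mul]
    _ = X.det * (U.det * (star U).det) := by ring
    _ = X.det := by rw [h1, mul_one]

lemma det_smul_one_add_smul {C : Matrix (Fin n) (Fin n) ℂ} (hC : C.IsHermitian) (a b : ℝ) :
    (a • (1 : Matrix (Fin n) (Fin n) ℂ) + b • C).det
      = ((∏ i, (a + b * hC.eigenvalues i) : ℝ) : ℂ) := by
  set U : Matrix (Fin n) (Fin n) ℂ := (hC.eigenvectorUnitary : Matrix (Fin n) (Fin n) ℂ) with hUdef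
  have hU : U * star U = 1 := (Matrix.mem_unitaryGroup_iff).mp hC.eigenvectorUnitary.2
  have key : U * (a • 1 + b • diagonal (RCLike.ofReal ∘ hC.eigenvalues)) * star U
      = a • (1 : Matrix (Fin n) (Fin n) ℂ) + b • C := by
    rw [Matrix.mul_add, Matrix.add_mul, Matrix.mul_smul, Matrix.mul_smul, Matrix.smul_mul,
      Matrix.smul_mul, Matrix.mul_one, hU]
    congr 1
    conv_rhs => rw [hC.spectral_theorem, Unitary.conjStarAlgAut_apply]
  rw [← key, unit_conj_det hU]
  have hdiag : a • (1 : Matrix (Fin n) (Fin n) ℂ)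
      + b • diagonal (RCLike.ofReal ∘ hC.eigenvalues)
      = diagonal (fun i => ((a + b * hC.eigenvalues i : ℝ) : ℂ)) := by
    ext i j
    by_cases h : i = j
    · subst h
      simp [Matrix.one_apply, Complex.real_smul]
    · simp [Matrix.one_apply, Matrix.diagonal_apply_ne _ h, h]
  rw [hdiag, det_diagonal]
  push_cast
  rfl


lemma det_one_add_psd {P : Matrix (Fin n) (Fin n) ℂ} (hP : P.PosSemidef) :
    (1 + P).det = ((∏ i, (1 + hP.1.eigenvalues i) : ℝ) : ℂ) := by
  have := det_smul_one_add_smul hP.1 1 1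
  simpa using this

lemma posDef_one_add {P : Matrix (Fin n) (Fin n) ℂ} (hP : P.PosSemidef) :
    (1 + P).PosDef :=
  Matrix.PosDef.add_posSemidef Matrix.PosDef.one hP

lemma det_real_of_posDef {P : Matrix (Fin n) (Fin n) ℂ} (hP : P.PosDef) :
    P.det = ((P.det.re : ℝ) : ℂ) ∧ 0 < P.det.re := by
  have h := hP.det_pos
  rw [Complex.lt_def] at h
  refine ⟨Complex.ext rfl ?_, by simpa using h.1⟩
  simpa using h.2.symm

/-- square root machinery for a positive definite matrix -/
lemma sqrt_facts {D : Matrix (Fin n) (Fin n) ℂ} (hD : D.PosDef) :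
    ∃ W : Matrix (Fin n) (Fin n) ℂ, W.PosSemidef ∧ W * W = D ∧ W * W⁻¹ = 1 ∧ W⁻¹ * W = 1 ∧
      (W⁻¹)ᴴ = W⁻¹ := by
  refine ⟨CFC.sqrt D, (CFC.sqrt_nonneg D).posSemidef, CFC.sqrt_mul_sqrt_self D hD.posSemidef.nonneg, ?_, ?_, ?_⟩
  all_goals
    have hdet : IsUnit (CFC.sqrt D).det := by
      have h2 : (CFC.sqrt D).det * (CFC.sqrt D).det = D.det := by
        rw [← det_mul, CFC.sqrt_mul_sqrt_self D hD.posSemidef.nonneg]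
      have hDdet : D.det ≠ 0 := hD.det_pos.ne'
      exact (isUnit_iff_ne_zero.mpr (fun h => hDdet (by rw [← h2, h, mul_zero])))
  · exact mul_nonsing_inv _ hdet
  · exact nonsing_inv_mul _ hdet
  · exact (CFC.sqrt_nonneg D).posSemidef.isHermitian.inv

lemma conj_cancel {W Q : Matrix (Fin n) (Fin n) ℂ} (hWi : W * W⁻¹ = 1)
    (hiW : W⁻¹ * W = 1) : W * (W⁻¹ * Q * W⁻¹) * W = Q := by
  calc W * (W⁻¹ * Q * W⁻¹) * W = (W * W⁻¹) * Q * (W⁻¹ * W) := by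
        simp only [Matrix.mul_assoc]
    _ = Q := by rw [hWi, hiW, Matrix.one_mul, Matrix.mul_one]

lemma det_re_mono {P Q : Matrix (Fin n) (Fin n) ℂ} (hP : P.PosSemidef) (hQ : Q.PosSemidef) :
    ((1 + P).det).re ≤ ((1 + P + Q).det).re := by
  obtain ⟨W, hW, hWW, hWi, hiW, hiH⟩ := sqrt_facts (posDef_one_add hP)
  set C := W⁻¹ * Q * W⁻¹ with hCdef
  have hC : C.PosSemidef := by
    have := hQ.conjTranspose_mul_mul_same W⁻¹
    rwa [hiH] at this
  have hQ' : W * C * W = Q := conj_cancel hWi hiW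
  have key : 1 + P + Q = W * (1 + C) * W := by
    rw [Matrix.mul_add, Matrix.add_mul, Matrix.mul_one, hWW, hQ']
  obtain ⟨hDre, hDpos⟩ := det_real_of_posDef (posDef_one_add hP)
  set d := ((1 + P).det).re with hd
  have hdetW : W.det * W.det = (1 + P).det := by rw [← det_mul, hWW]
  have hprod : 1 ≤ ∏ i, (1 + hC.1.eigenvalues i) := by
    have := Finset.prod_le_prod (s := Finset.univ) (f := fun _ : Fin n => (1:ℝ))
      (g := fun i => 1 + hC.1.eigenvalues i) (fun i _ => zero_le_one)
      (fun i _ => le_add_of_nonneg_right (hC.eigenvalues_nonneg i))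
    simpa using this
  have hdet : (1 + P + Q).det = ((d * ∏ i, (1 + hC.1.eigenvalues i) : ℝ) : ℂ) := by
    rw [key, det_mul, det_mul, mul_comm, ← mul_assoc, hdetW, det_one_add_psd hC, hDre]
    push_cast
    ring
  rw [hdet, Complex.ofReal_re]
  nlinarith

lemma pos_aux {a b c : ℝ} (ha : 0 ≤ a) (hb : 0 ≤ b) (hab : a + b = 1) (hc : 0 < c) :
    0 < a + b * c := by
  rcases eq_or_lt_of_le ha with h | h
  · have : b = 1 := by linarith
    simpa [← h, this] using hc
  · exact add_pos_of_pos_of_nonneg h (mul_nonneg hb hc.le)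

lemma logdet_concave_pair {P Q : Matrix (Fin n) (Fin n) ℂ} (hP : P.PosDef) (hQ : Q.PosDef)
    {a b : ℝ} (ha : 0 ≤ a) (hb : 0 ≤ b) (hab : a + b = 1) :
    a * Real.log (P.det.re) + b * Real.log (Q.det.re)
      ≤ Real.log (((a • P + b • Q).det).re) := by
  obtain ⟨W, hW, hWW, hWi, hiW, hiH⟩ := sqrt_facts hP
  set C := W⁻¹ * Q * W⁻¹ with hCdef
  have hC : C.PosSemidef := by
    have := hQ.posSemidef.conjTranspose_mul_mul_same W⁻¹
    rwa [hiH] at this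
  have hQC : W * C * W = Q := conj_cancel hWi hiW
  have key : a • P + b • Q = W * (a • 1 + b • C) * W := by
    rw [Matrix.mul_add, Matrix.add_mul, Matrix.mul_smul, Matrix.mul_smul, Matrix.smul_mul,
      Matrix.smul_mul, Matrix.mul_one, hWW, hQC]
  obtain ⟨hPre, hPpos⟩ := det_real_of_posDef hP
  obtain ⟨hQre, hQpos⟩ := det_real_of_posDef hQ
  set p := P.det.re with hp
  set q := Q.det.re with hq
  have hdetW : W.det * W.det = P.det := by rw [← det_mul, hWW]
  have hCdet : C.det = ((∏ i, hC.1.eigenvalues i : ℝ) : ℂ) := by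
    rw [hC.1.det_eq_prod_eigenvalues]; push_cast; rfl
  have hQdet : Q.det = P.det * C.det := by
    rw [← hQC, det_mul, det_mul, mul_comm, ← mul_assoc, hdetW]
  have hQP : q = p * ∏ i, hC.1.eigenvalues i := by
    have : ((q : ℝ) : ℂ) = ((p * ∏ i, hC.1.eigenvalues i : ℝ) : ℂ) := by
      rw [← hQre, hQdet, hPre, hCdet]; push_cast; ring
    exact_mod_cast this
  have hCdetpos : (0:ℝ) < ∏ i, hC.1.eigenvalues i := by
    have hppos := hPpos
    nlinarith [hQpos]
  have hci : ∀ i, 0 < hC.1.eigenvalues i := by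
    intro i
    rcases lt_or_eq_of_le (hC.eigenvalues_nonneg i) with h | h
    · exact h
    · exfalso
      have : (∏ j, hC.1.eigenvalues j) = 0 :=
        Finset.prod_eq_zero (Finset.mem_univ i) h.symm
      rw [this] at hCdetpos; exact lt_irrefl 0 hCdetpos
  have hdet : ((a • P + b • Q).det).re = p * ∏ i, (a + b * hC.1.eigenvalues i) := by
    have : (a • P + b • Q).det = ((p * ∏ i, (a + b * hC.1.eigenvalues i) : ℝ) : ℂ) := by
      rw [key, det_mul, det_mul, mul_comm, ← mul_assoc, hdetW, det_smul_one_add_smul hC.1, hPre]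
      push_cast
      ring
    rw [this, Complex.ofReal_re]
  rw [hdet, Real.log_mul hPpos.ne'
      (Finset.prod_pos fun i _ => pos_aux ha hb hab (hci i)).ne',
    Real.log_prod (fun i _ => (pos_aux ha hb hab (hci i)).ne')]
  have hterm : ∀ i, b * Real.log (hC.1.eigenvalues i) ≤ Real.log (a + b * hC.1.eigenvalues i) := by
    intro i
    have := (strictConcaveOn_log_Ioi.concaveOn).2 (Set.mem_Ioi.mpr one_pos)
      (Set.mem_Ioi.mpr (hci i)) ha hb hab
    simpa [smul_eq_mul] using this
  have hsum : b * ∑ i, Real.log (hC.1.eigenvalues i)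
      ≤ ∑ i, Real.log (a + b * hC.1.eigenvalues i) := by
    rw [Finset.mul_sum]
    exact Finset.sum_le_sum fun i _ => hterm i
  have hlogQ : Real.log q = Real.log p + ∑ i, Real.log (hC.1.eigenvalues i) := by
    rw [hQP, Real.log_mul hPpos.ne' hCdetpos.ne',
      Real.log_prod (fun i _ => (hci i).ne')]
  have hcomb : a * Real.log p + b * Real.log p = Real.log p := by
    rw [← add_mul, hab, one_mul]
  rw [hlogQ]
  have := hsum
  linarith [hsum, hcomb]


lemma psd_diag_complex {t : Fin n → ℝ} (ht : ∀ i, 0 ≤ t i) :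
    (diagonal (fun i => ((t i : ℝ) : ℂ))).PosSemidef :=
  posSemidef_diagonal_iff.mpr fun i => Complex.zero_le_real.mpr (ht i)

lemma Nmat_psd {B : Matrix (Fin n) (Fin n) ℂ} (hB : Bᴴ = B) {t : Fin n → ℝ}
    (ht : ∀ i, 0 ≤ t i) :
    (B * diagonal (fun i => ((t i : ℝ) : ℂ)) * B).PosSemidef := by
  have := (psd_diag_complex ht).mul_mul_conjTranspose_same B
  rwa [hB] at this

lemma det_shift {B M : Matrix (Fin n) (Fin n) ℂ} (hMB : B * B = M) (d : Fin n → ℂ) :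
    (1 + diagonal d * M).det = (1 + B * diagonal d * B).det := by
  rw [← hMB, ← Matrix.mul_assoc, Matrix.det_one_add_mul_comm, ← Matrix.mul_assoc]

lemma diag_comb (a b : ℝ) (x y : Fin n → ℝ) :
    a • diagonal (fun i => ((x i : ℝ) : ℂ)) + b • diagonal (fun i => ((y i : ℝ) : ℂ))
      = diagonal (fun i => ((a * x i + b * y i : ℝ) : ℂ)) := by
  ext i j
  by_cases h : i = j
  · subst h
    simp [Complex.real_smul]
  · simp [Matrix.diagonal_apply_ne _ h]

lemma Nmat_comb {B : Matrix (Fin n) (Fin n) ℂ} (a b : ℝ) (x y : Fin n → ℝ) :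
    a • (B * diagonal (fun i => ((x i : ℝ) : ℂ)) * B)
      + b • (B * diagonal (fun i => ((y i : ℝ) : ℂ)) * B)
      = B * diagonal (fun i => ((a * x i + b * y i : ℝ) : ℂ)) * B := by
  rw [← diag_comb a b x y, Matrix.mul_add, Matrix.add_mul, Matrix.mul_smul, Matrix.mul_smul,
    Matrix.smul_mul, Matrix.smul_mul]

lemma Nmat_add_sub {B : Matrix (Fin n) (Fin n) ℂ} (u v : Fin n → ℝ) :
    B * diagonal (fun i => ((v i : ℝ) : ℂ)) * B
      + B * diagonal (fun i => ((u i - v i : ℝ) : ℂ)) * B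
      = B * diagonal (fun i => ((u i : ℝ) : ℂ)) * B := by
  rw [← Matrix.add_mul, ← Matrix.mul_add, diagonal_add]
  congr 2
  funext i
  push_cast
  ring

lemma T_nonneg {s : ℝ} (hs : 0 ≤ s) : 0 ≤ 1 - (2:ℝ) ^ (-s) :=
  sub_nonneg.mpr (Real.rpow_le_one_of_one_le_of_nonpos one_le_two (neg_nonpos.mpr hs))

lemma T_concave {p q a b : ℝ} (ha : 0 ≤ a) (hb : 0 ≤ b) (hab : a + b = 1) :
    a * (1 - (2:ℝ) ^ (-p)) + b * (1 - (2:ℝ) ^ (-q)) ≤ 1 - (2:ℝ) ^ (-(a * p + b * q)) := by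
  have h2 : ∀ s : ℝ, (2:ℝ) ^ (s : ℝ) = Real.exp (Real.log 2 * s) := fun s =>
    Real.rpow_def_of_pos two_pos s
  have hconv := convexOn_exp.2 (Set.mem_univ (Real.log 2 * (-p)))
    (Set.mem_univ (Real.log 2 * (-q))) ha hb hab
  simp only [smul_eq_mul] at hconv
  have harg : Real.log 2 * (-(a * p + b * q))
      = a * (Real.log 2 * (-p)) + b * (Real.log 2 * (-q)) := by ring
  rw [h2, h2, h2, harg]
  linarith [hconv]

end LogDetCEO

open LogDetCEO in
/-- For an `r×r` Hermitian positive semidefinite complex matrix `M` and nonnegative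
`q ∈ ℝ^r`, `det(I + diag(1 − 2^{−qᵢ})·M)` is a positive real number, and
`q ↦ log det(I + diag(1 − 2^{−qᵢ})·M)` is concave on the nonnegative orthant. -/
theorem logdet_concave_in_compression_parameters (r : ℕ)
    (M : Matrix (Fin r) (Fin r) ℂ) (hM : M.PosSemidef) :
    (∀ q : Fin r → ℝ, (∀ i, 0 ≤ q i) →
      0 < ((1 + Matrix.diagonal (fun i => ((1 - (2 : ℝ) ^ (-(q i)) : ℝ) : ℂ)) * M).det).re ∧
      ((1 + Matrix.diagonal (fun i => ((1 - (2 : ℝ) ^ (-(q i)) : ℝ) : ℂ)) * M).det).im = 0) ∧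
    ConcaveOn ℝ {q : Fin r → ℝ | ∀ i, 0 ≤ q i}
      (fun q => Real.log
        ((1 + Matrix.diagonal (fun i => ((1 - (2 : ℝ) ^ (-(q i)) : ℝ) : ℂ)) * M).det).re) := by
  have hBB : CFC.sqrt M * CFC.sqrt M = M := CFC.sqrt_mul_sqrt_self M hM.nonneg
  have hBH : (CFC.sqrt M)ᴴ = CFC.sqrt M := (CFC.sqrt_nonneg M).posSemidef.isHermitian
  set B := CFC.sqrt M with hBdef
  -- the transformed matrix for a parameter vector t
  set N : (Fin r → ℝ) → Matrix (Fin r) (Fin r) ℂ :=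
    fun t => B * diagonal (fun i => ((t i : ℝ) : ℂ)) * B with hNdef
  have hdetN : ∀ t : Fin r → ℝ,
      (1 + diagonal (fun i => ((t i : ℝ) : ℂ)) * M).det = (1 + N t).det :=
    fun t => det_shift hBB _
  have hNpsd : ∀ t : Fin r → ℝ, (∀ i, 0 ≤ t i) → (N t).PosSemidef :=
    fun t ht => Nmat_psd hBH ht
  constructor
  · intro q hq
    have ht : ∀ i, 0 ≤ 1 - (2:ℝ) ^ (-(q i)) := fun i => T_nonneg (hq i)
    have hPD : (1 + N (fun i => 1 - (2:ℝ) ^ (-(q i)))).PosDef := posDef_one_add (hNpsd _ ht)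
    have hpos := hPD.det_pos
    rw [Complex.lt_def] at hpos
    have hdet := hdetN (fun i => 1 - (2:ℝ) ^ (-(q i)))
    constructor
    · rw [hdet]; simpa using hpos.1
    · rw [hdet]; simpa using hpos.2.symm
  · constructor
    · intro x hx y hy a b ha hb hab
      intro i
      have h1 : (a • x + b • y) i = a * x i + b * y i := by simp [smul_eq_mul]
      rw [h1]
      exact add_nonneg (mul_nonneg ha (hx i)) (mul_nonneg hb (hy i))
    · intro x hx y hy a b ha hb hab
      simp only [smul_eq_mul, Pi.add_apply, Pi.smul_apply]
      rw [hdetN (fun i => 1 - (2:ℝ) ^ (-(x i))), hdetN (fun i => 1 - (2:ℝ) ^ (-(y i))),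
        hdetN (fun i => 1 - (2:ℝ) ^ (-(a * x i + b * y i)))]
      set tx : Fin r → ℝ := fun i => 1 - (2:ℝ) ^ (-(x i)) with htx
      set ty : Fin r → ℝ := fun i => 1 - (2:ℝ) ^ (-(y i)) with hty
      set u : Fin r → ℝ := fun i => 1 - (2:ℝ) ^ (-(a * x i + b * y i)) with hu
      set v : Fin r → ℝ := fun i => a * tx i + b * ty i with hv
      have htx0 : ∀ i, 0 ≤ tx i := fun i => T_nonneg (hx i)
      have hty0 : ∀ i, 0 ≤ ty i := fun i => T_nonneg (hy i)
      have hv0 : ∀ i, 0 ≤ v i := fun i =>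
        add_nonneg (mul_nonneg ha (htx0 i)) (mul_nonneg hb (hty0 i))
      have hw0 : ∀ i, 0 ≤ u i - v i := fun i =>
        sub_nonneg.mpr (T_concave ha hb hab)
      have hPx : (1 + N tx).PosDef := posDef_one_add (hNpsd tx htx0)
      have hPy : (1 + N ty).PosDef := posDef_one_add (hNpsd ty hty0)
      have hPv : (1 + N v).PosDef := posDef_one_add (hNpsd v hv0)
      have step1 := logdet_concave_pair hPx hPy ha hb hab
      have hone : a • (1 : Matrix (Fin r) (Fin r) ℂ) + b • (1 : Matrix (Fin r) (Fin r) ℂ)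
          = 1 := by rw [← add_smul, hab, one_smul]
      have hNcomb : a • N tx + b • N ty = N v := Nmat_comb a b tx ty
      have hcomb : a • (1 + N tx) + b • (1 + N ty) = 1 + N v := by
        calc a • (1 + N tx) + b • (1 + N ty)
            = (a • (1 : Matrix (Fin r) (Fin r) ℂ) + b • 1) + (a • N tx + b • N ty) := by
              rw [smul_add, smul_add]; abel
          _ = 1 + N v := by rw [hone, hNcomb]
      rw [hcomb] at step1
      have hNadd : N v + N (fun i => u i - v i) = N u := Nmat_add_sub u v
      have hmono := det_re_mono (hNpsd v hv0) (hNpsd (fun i => u i - v i) hw0)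
      rw [add_assoc, hNadd] at hmono
      have hvpos : 0 < ((1 + N v).det).re := (det_real_of_posDef hPv).2
      calc a * Real.log ((1 + N tx).det).re + b * Real.log ((1 + N ty).det).re
          ≤ Real.log ((1 + N v).det).re := step1
        _ ≤ Real.log ((1 + N u).det).re :=
            (Real.log_le_log_iff hvpos (lt_of_lt_of_le hvpos hmono)).mpr hmono
end
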